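/- If f is analytic on the open unit disk with f(0)=0, f'(0)=1, and |z f'(z) - f(z)| < 1/2 for all z in the disk, then |z| - |z|²/2 ≤ |f(z)| ≤ |z| + |z|²/2 for all z in the disk. -/

import Mathlib

open Metric Complex

theorem stmt_1 (f : ℂ → ℂ)
    (hf : DifferentiableOn ℂ f (ball (0:ℂ) 1))
    (hf0 : f 0 = 0) (hf1 : deriv f 0 = 1)
    (hΩ : ∀ z ∈ ball (0:ℂ) 1, ‖z * deriv f z - f z‖ < 1/2) :
    ∀ z ∈ ball (0:ℂ) 1,
      ‖z‖ - ‖z‖^2 / 2 ≤ ‖f z‖ ∧ ‖f z‖ ≤ ‖z‖ + ‖z‖^2 / 2 := by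
  have hSo : IsOpen (ball (0:ℂ) 1) := isOpen_ball
  have h0S : (0:ℂ) ∈ ball (0:ℂ) 1 := mem_ball_self one_pos
  have hfa : AnalyticOnNhd ℂ f (ball (0:ℂ) 1) := hf.analyticOnNhd hSo
  have hdf : AnalyticOnNhd ℂ (deriv f) (ball (0:ℂ) 1) := hfa.deriv
  set u : ℂ → ℂ := fun z => z * deriv f z - f z with hu
  have hua : DifferentiableOn ℂ u (ball (0:ℂ) 1) :=
    (differentiableOn_id.mul hdf.differentiableOn).sub hf
  have hu0 : u 0 = 0 := by simp [hu, hf0]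
  have hdu0 : deriv u 0 = 0 := by
    have h1 : HasDerivAt (fun z : ℂ => z * deriv f z) (0 * deriv (deriv f) 0 + deriv f 0 * 1) 0 := by
      have : HasDerivAt (deriv f) (deriv (deriv f) 0) 0 :=
        ((hdf 0 h0S).differentiableAt.hasDerivAt)
      exact ((hasDerivAt_id' 0).mul this).congr_deriv (by ring)
    have h2 : HasDerivAt f (deriv f 0) 0 :=
      (hf.differentiableAt (hSo.mem_nhds h0S)).hasDerivAt
    have h3 : HasDerivAt u 0 0 := by
      have := h1.sub h2
      exact this.congr_deriv (by simp)
    exact h3.deriv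
  have hmaps : Set.MapsTo u (ball (0:ℂ) 1) (ball (u 0) (1/2)) := by
    intro z hz
    rw [hu0]
    exact mem_ball_zero_iff.2 (hΩ z hz)
  set u₁ : ℂ → ℂ := dslope u 0 with hu₁def
  have hu₁half : ∀ z ∈ ball (0:ℂ) 1, ‖u₁ z‖ ≤ 1/2 := by
    intro z hz
    have := Complex.norm_dslope_le_div_of_mapsTo_ball hua (hmaps.mono_right ball_subset_closedBall) hz
    simpa using this
  have hu₁d : DifferentiableOn ℂ u₁ (ball (0:ℂ) 1) :=
    (differentiableOn_dslope (hSo.mem_nhds h0S)).2 hua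
  have hu₁0 : u₁ 0 = 0 := by
    rw [hu₁def, dslope_same]; exact hdu0
  -- second Schwarz with ε
  have hu₁eps : ∀ ε : ℝ, 0 < ε → ∀ z ∈ ball (0:ℂ) 1, ‖u₁ z‖ ≤ (1/2 + ε) * ‖z‖ := by
    intro ε hε z hz
    have hmaps₁ : Set.MapsTo u₁ (ball (0:ℂ) 1) (ball (u₁ 0) (1/2 + ε)) := by
      intro ζ hζ
      rw [hu₁0, mem_ball_zero_iff]
      exact lt_of_le_of_lt (hu₁half ζ hζ) (by linarith)
    have := Complex.dist_le_div_mul_dist_of_mapsTo_ball hu₁d (hmaps₁.mono_right ball_subset_closedBall) hz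
    rw [hu₁0] at this
    simpa [dist_zero_right, dist_eq_norm] using this
  have hu₁le : ∀ z ∈ ball (0:ℂ) 1, ‖u₁ z‖ ≤ ‖z‖ / 2 := by
    intro z hz
    rcases eq_or_ne z 0 with rfl | hz0
    · simp [hu₁0]
    have hzpos : (0:ℝ) < ‖z‖ := norm_pos_iff.2 hz0
    by_contra h
    push_neg at h
    have hεpos : 0 < (‖u₁ z‖ - ‖z‖ / 2) / (2 * ‖z‖) :=
      div_pos (by linarith) (by positivity)
    have h6 := hu₁eps _ hεpos z hz
    have h7 : (‖u₁ z‖ - ‖z‖ / 2) / (2 * ‖z‖) * ‖z‖ = (‖u₁ z‖ - ‖z‖ / 2) / 2 := by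
      rw [div_mul_eq_mul_div, mul_comm (2:ℝ) ‖z‖, mul_comm (‖u₁ z‖ - ‖z‖ / 2) ‖z‖,
        mul_div_mul_left _ _ hzpos.ne']
    rw [add_mul, h7] at h6
    linarith
  have huz : ∀ z : ℂ, u z = z * u₁ z := by
    intro z
    rcases eq_or_ne z 0 with rfl | hz0
    · simp [hu0]
    · rw [hu₁def, dslope_of_ne _ hz0, slope_def_field]
      field_simp [hu0]
      rw [hu0]; ring
  set w : ℂ → ℂ := dslope f 0 with hwdef
  have hwd : DifferentiableOn ℂ w (ball (0:ℂ) 1) :=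
    (differentiableOn_dslope (hSo.mem_nhds h0S)).2 hf
  have hw0 : w 0 = 1 := by rw [hwdef, dslope_same, hf1]
  have hfw : ∀ z : ℂ, f z = z * w z := by
    intro z
    rcases eq_or_ne z 0 with rfl | hz0
    · simp [hf0]
    · rw [hwdef, dslope_of_ne _ hz0, slope_def_field]
      field_simp [hf0]
      rw [hf0]; ring
  -- derivative of w on punctured ball
  have hderivw : ∀ z ∈ ball (0:ℂ) 1, z ≠ 0 → deriv w z = u z / z ^ 2 := by
    intro z hz hz0
    have hev : w =ᶠ[nhds z] fun ζ => f ζ / ζ := by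
      have hmem : {ζ : ℂ | ζ ≠ 0} ∈ nhds z := isOpen_ne.mem_nhds hz0
      filter_upwards [hmem] with ζ hζ
      rw [hwdef, dslope_of_ne _ hζ, slope_def_field]
      simp [hf0]
    rw [hev.deriv_eq]
    have hfz : DifferentiableAt ℂ f z := hf.differentiableAt (hSo.mem_nhds hz)
    have hq : HasDerivAt (fun ζ : ℂ => f ζ / ζ) ((deriv f z * z - f z * 1) / z ^ 2) z :=
      hfz.hasDerivAt.div (hasDerivAt_id z) hz0
    rw [hq.deriv, hu]
    ring_nf
  have hbound : ∀ z ∈ ball (0:ℂ) 1, z ≠ 0 → ‖deriv w z‖ ≤ 1/2 := by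
    intro z hz hz0
    rw [hderivw z hz hz0, huz z]
    have hzpos : (0:ℝ) < ‖z‖ := norm_pos_iff.2 hz0
    rw [norm_div, norm_mul, norm_pow]
    rw [div_le_iff₀ (by positivity)]
    have := hu₁le z hz
    nlinarith [this]
  -- bound at 0 by continuity
  have hwa : AnalyticOnNhd ℂ w (ball (0:ℂ) 1) := hwd.analyticOnNhd hSo
  have hdwc : ContinuousAt (deriv w) 0 := ((hwa.deriv) 0 h0S).continuousAt
  have hbound0 : ‖deriv w 0‖ ≤ 1/2 := by
    have hne : (nhdsWithin (0:ℂ) {(0:ℂ)}ᶜ).NeBot := by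
      exact Module.punctured_nhds_neBot ℝ ℂ 0
    have htend : Filter.Tendsto (fun z => ‖deriv w z‖) (nhdsWithin (0:ℂ) {(0:ℂ)}ᶜ) (nhds ‖deriv w 0‖) :=
      (hdwc.norm.continuousWithinAt)
    refine le_of_tendsto htend ?_
    have hmem : ball (0:ℂ) 1 ∈ nhdsWithin (0:ℂ) {(0:ℂ)}ᶜ :=
      nhdsWithin_le_nhds (hSo.mem_nhds h0S)
    filter_upwards [hmem, self_mem_nhdsWithin] with z hz hz0
    exact hbound z hz hz0
  have hboundall : ∀ z ∈ ball (0:ℂ) 1, ‖deriv w z‖ ≤ 1/2 := by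
    intro z hz
    rcases eq_or_ne z 0 with rfl | hz0
    · exact hbound0
    · exact hbound z hz hz0
  -- mean value inequality
  have hMVT : ∀ z ∈ ball (0:ℂ) 1, ‖w z - 1‖ ≤ 1/2 * ‖z‖ := by
    intro z hz
    have key := (convex_ball (0:ℂ) 1).norm_image_sub_le_of_norm_hasFDerivWithin_le
      (f := w)
      (f' := fun x => ((1 : ℂ →L[ℂ] ℂ).smulRight (deriv w x)).restrictScalars ℝ)
      (C := 1/2) ?_ ?_ h0S hz
    · simpa [hw0] using key
    · intro x hx
      have : HasDerivAt w (deriv w x) x :=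
        (hwd.differentiableAt (hSo.mem_nhds hx)).hasDerivAt
      exact (this.hasFDerivAt.restrictScalars ℝ).hasFDerivWithinAt
    · intro x hx
      rw [ContinuousLinearMap.norm_restrictScalars,
        ContinuousLinearMap.norm_smulRight_apply, norm_one, one_mul]
      exact hboundall x hx
  intro z hz
  have h1 := hMVT z hz
  have h2 : ‖f z‖ = ‖z‖ * ‖w z‖ := by rw [hfw z, norm_mul]
  have h3 : ‖w z‖ ≤ 1 + 1/2 * ‖z‖ := by
    calc ‖w z‖ = ‖(w z - 1) + 1‖ := by ring_nf
    _ ≤ ‖w z - 1‖ + ‖(1:ℂ)‖ := norm_add_le _ _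
    _ ≤ 1/2 * ‖z‖ + 1 := by rw [norm_one]; linarith
    _ = 1 + 1/2 * ‖z‖ := by ring
  have h4 : 1 - 1/2 * ‖z‖ ≤ ‖w z‖ := by
    have := norm_sub_norm_le (1:ℂ) (1 - w z)
    have he : (1:ℂ) - (1 - w z) = w z := by ring
    rw [he, norm_one] at this
    have : ‖(1:ℂ) - w z‖ = ‖w z - 1‖ := norm_sub_rev _ _
    have h5 := norm_sub_norm_le (1:ℂ) (1 - w z)
    rw [he, norm_one, this] at h5
    linarith
  have hznn : (0:ℝ) ≤ ‖z‖ := norm_nonneg z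
  constructor
  · nlinarith [h2, h4]
  · nlinarith [h2, h3]
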